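/- Let S be a positive semi-definite d×d matrix, x ∈ ℝ^d with x ∈ range(S), and let S' = S + x xᵀ. Then S'† = S† − (1/β) S† x xᵀ S† where β = 1 + xᵀ S† x. -/

import Mathlib

open Matrix

/-- `Sd` is the Moore–Penrose pseudoinverse of `S`. -/
def IsMoorePenroseInv {d : ℕ} (S Sd : Matrix (Fin d) (Fin d) ℝ) : Prop :=
  S * Sd * S = S ∧ Sd * S * Sd = Sd ∧ (S * Sd)ᵀ = S * Sd ∧ (Sd * S)ᵀ = Sd * S

namespace MPaux

variable {d : ℕ}

lemma mul_vecMulVec (M : Matrix (Fin d) (Fin d) ℝ) (a b : Fin d → ℝ) :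
    M * vecMulVec a b = vecMulVec (M.mulVec a) b := by
  ext i j
  simp only [Matrix.mul_apply, vecMulVec_apply, Matrix.mulVec, dotProduct,
    Finset.sum_mul]
  exact Finset.sum_congr rfl fun k _ => by ring

lemma vecMulVec_mul (M : Matrix (Fin d) (Fin d) ℝ) (a b : Fin d → ℝ) :
    vecMulVec a b * M = vecMulVec a (Mᵀ.mulVec b) := by
  ext i j
  simp only [Matrix.mul_apply, vecMulVec_apply, Matrix.mulVec, dotProduct,
    Finset.mul_sum, Matrix.transpose_apply]
  exact Finset.sum_congr rfl fun k _ => by ring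

lemma vecMulVec_mul_vecMulVec (a b c e : Fin d → ℝ) :
    vecMulVec a b * vecMulVec c e = (b ⬝ᵥ c) • vecMulVec a e := by
  ext i j
  simp only [Matrix.mul_apply, vecMulVec_apply, dotProduct, Matrix.smul_apply,
    Finset.sum_mul, smul_eq_mul, Finset.mul_sum]
  exact Finset.sum_congr rfl fun k _ => by ring

lemma transpose_vecMulVec (a b : Fin d → ℝ) :
    (vecMulVec a b)ᵀ = vecMulVec b a := by
  ext i j
  simp [vecMulVec_apply, mul_comm]

lemma mp_unique (S A B : Matrix (Fin d) (Fin d) ℝ)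
    (hA : IsMoorePenroseInv S A) (hB : IsMoorePenroseInv S B) : A = B := by
  obtain ⟨hA1, hA2, hA3, hA4⟩ := hA
  obtain ⟨hB1, hB2, hB3, hB4⟩ := hB
  have e1 : (S * B) * (S * A) = S * A := by
    rw [← Matrix.mul_assoc, Matrix.mul_assoc S B S, ← Matrix.mul_assoc S B S] at *
    rw [hB1]
  have e2 : S * A = (S * A) * (S * B) := by
    have h := congrArg Matrix.transpose e1
    rw [Matrix.transpose_mul, hA3, hB3] at h
    exact h.symm
  have hSA : S * A = S * B := by
    rw [e2, ← Matrix.mul_assoc, Matrix.mul_assoc (S*A) S B]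
    rw [show S * A * (S * B) = S * A * S * B by rw [Matrix.mul_assoc (S*A) S B], hA1]
  have e1' : (A * S) * (B * S) = A * S := by
    rw [Matrix.mul_assoc, ← Matrix.mul_assoc S B S, hB1]
  have e2' : A * S = (B * S) * (A * S) := by
    have h := congrArg Matrix.transpose e1'
    rw [Matrix.transpose_mul, hA4, hB4] at h
    exact h.symm
  have hAS : A * S = B * S := by
    rw [e2', Matrix.mul_assoc, ← Matrix.mul_assoc S A S, hA1]
  calc A = A * S * A := hA2.symm
    _ = B * S * A := by rw [hAS]
    _ = B * (S * A) := by rw [Matrix.mul_assoc]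
    _ = B * (S * B) := by rw [hSA]
    _ = B * S * B := by rw [Matrix.mul_assoc]
    _ = B := hB2

end MPaux

theorem stmt_8 (d : ℕ) (S Sd : Matrix (Fin d) (Fin d) ℝ)
    (hS : S.PosSemidef) (hSd : IsMoorePenroseInv S Sd)
    (x : Fin d → ℝ) (hx : ∃ z, S.mulVec z = x) :
    IsMoorePenroseInv (S + vecMulVec x x)
      (Sd - (1 / (1 + x ⬝ᵥ Sd.mulVec x)) • (Sd * vecMulVec x x * Sd)) := by
  obtain ⟨h1, h2, h3, h4⟩ := hSd
  have hSsym : Sᵀ = S := by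
    have := hS.1
    rw [Matrix.IsHermitian] at this
    simpa using this
  -- Sd is symmetric by uniqueness of the Moore-Penrose inverse
  have hSdsym : Sdᵀ = Sd := by
    refine MPaux.mp_unique S Sdᵀ Sd ?_ ⟨h1, h2, h3, h4⟩
    have e3 : S * Sdᵀ = Sd * S := by
      conv_lhs => rw [← hSsym]
      rw [← Matrix.transpose_mul]
      exact h4
    have e4 : Sdᵀ * S = S * Sd := by
      conv_lhs => rw [← hSsym]
      rw [← Matrix.transpose_mul]
      exact h3
    refine ⟨?_, ?_, ?_, ?_⟩
    · have h := congrArg Matrix.transpose h1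
      simpa [Matrix.transpose_mul, hSsym, Matrix.mul_assoc] using h
    · have h := congrArg Matrix.transpose h2
      simpa [Matrix.transpose_mul, hSsym, Matrix.mul_assoc] using h
    · rw [e3]; exact h4
    · rw [e4]; exact h3
  have hcomm : S * Sd = Sd * S := by
    conv_lhs => rw [← h3]
    rw [Matrix.transpose_mul, hSdsym, hSsym]
  obtain ⟨z, hz⟩ := hx
  set u : Fin d → ℝ := Sd.mulVec x with hu
  have hSu : S.mulVec u = x := by
    rw [hu, Matrix.mulVec_mulVec, ← hz, Matrix.mulVec_mulVec, h1]
  set α : ℝ := x ⬝ᵥ Sd.mulVec x with hα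
  have hαnn : 0 ≤ α := by
    have := hS.dotProduct_mulVec_nonneg u
    rw [show star u = u from rfl] at this
    rw [hα, ← hu, ← hSu, dotProduct_comm]
    exact this
  set β : ℝ := 1 + α with hβ
  have hβpos : 0 < β := by positivity
  have hβne : β ≠ 0 := ne_of_gt hβpos
  set c : ℝ := 1 / β with hc
  have hcβ : c * β = 1 := one_div_mul_cancel hβne
  have hV : Sd * vecMulVec x x * Sd = vecMulVec u u := by
    rw [MPaux.mul_vecMulVec, MPaux.vecMulVec_mul, hSdsym]
  rw [hV]
  set X : Matrix (Fin d) (Fin d) ℝ := vecMulVec x x with hX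
  set V : Matrix (Fin d) (Fin d) ℝ := vecMulVec u u with hVdef
  set W : Matrix (Fin d) (Fin d) ℝ := vecMulVec x u with hW
  have hSV : S * V = W := by rw [hVdef, MPaux.mul_vecMulVec, hSu]
  have hXSd : X * Sd = W := by rw [hX, MPaux.vecMulVec_mul, hSdsym]
  have hXV : X * V = α • W := by
    rw [hX, hVdef, MPaux.vecMulVec_mul_vecMulVec, hW, hα, hu]
  -- the key product identity
  have key : (S + X) * (Sd - c • V) = S * Sd := by
    rw [Matrix.add_mul, Matrix.mul_sub, Matrix.mul_sub, Matrix.mul_smul,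
      Matrix.mul_smul, hSV, hXSd, hXV, smul_smul]
    have hcα : c * α = 1 - c := by
      have : c * (1 + α) = 1 := by rw [← hβ]; exact hcβ
      linarith [this]
    rw [hcα, sub_smul, one_smul]
    abel
  have hTsym : (Sd - c • V)ᵀ = Sd - c • V := by
    rw [Matrix.transpose_sub, Matrix.transpose_smul, hSdsym, hVdef,
      MPaux.transpose_vecMulVec]
  have hS'sym : (S + X)ᵀ = S + X := by
    rw [Matrix.transpose_add, hSsym, hX, MPaux.transpose_vecMulVec]
  have key2 : (Sd - c • V) * (S + X) = Sd * S := by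
    have h := congrArg Matrix.transpose key
    rw [Matrix.transpose_mul, hTsym, hS'sym, h3, hcomm] at h
    exact h
  refine ⟨?_, ?_, ?_, ?_⟩
  · rw [key, Matrix.mul_add, h1, hX, MPaux.mul_vecMulVec, ← hz,
      Matrix.mulVec_mulVec, h1]
  · rw [key2, Matrix.mul_sub, Matrix.mul_smul, h2, hVdef, MPaux.mul_vecMulVec,
      hu, Matrix.mulVec_mulVec, h2]
  · rw [key, h3]
  · rw [key2, ← hcomm, h3]
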